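/- For every finite ultrametric space (X,d) with |X| = n ≥ 1, the cardinality of the center of distances satisfies |C(X)| ≤ 1 + ⌊log₂ n⌋. -/

import Mathlib

/-- The center of distances of a metric space. -/
def centerOfDistances (X : Type*) [MetricSpace X] : Set ℝ :=
  {t : ℝ | ∀ p : X, ∃ x : X, dist p x = t}

/-- Key counting lemma: if every point of `A` has, for each `t ∈ T`, a partner in `A`
at distance exactly `t`, where all elements of `T` are positive, then `2 ^ |T| ≤ |A|`. -/
lemma pow_card_le_card {X : Type*} [MetricSpace X] [IsUltrametricDist X]
    (T : Finset ℝ) :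
    ∀ A : Finset X, A.Nonempty → (∀ t ∈ T, 0 < t) →
      (∀ t ∈ T, ∀ p ∈ A, ∃ x ∈ A, dist p x = t) → 2 ^ T.card ≤ A.card := by
  classical
  induction T using Finset.induction_on_max with
  | empty =>
    intro A hA _ _
    simpa using Finset.card_pos.mpr hA
  | insert t₁ T' hmax ih =>
    intro A hA hpos h
    have ht₁pos : 0 < t₁ := hpos t₁ (Finset.mem_insert_self _ _)
    obtain ⟨p, hp⟩ := hA
    obtain ⟨q, hq, hpq⟩ := h t₁ (Finset.mem_insert_self _ _) p hp
    set A₁ := A.filter (fun x => dist p x < t₁) with hA₁def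
    set A₂ := A.filter (fun x => dist q x < t₁) with hA₂def
    have hdisj : Disjoint A₁ A₂ := by
      rw [Finset.disjoint_left]
      intro x hx1 hx2
      rw [hA₁def, Finset.mem_filter] at hx1
      rw [hA₂def, Finset.mem_filter] at hx2
      have : dist p q ≤ max (dist p x) (dist x q) :=
        IsUltrametricDist.dist_triangle_max p x q
      rw [hpq] at this
      rw [dist_comm] at hx2
      exact absurd (this.trans_lt (max_lt hx1.2 hx2.2)) (lt_irrefl _)
    have ht₁notmem : t₁ ∉ T' := fun hmem => lt_irrefl t₁ (hmax t₁ hmem)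
    have key : ∀ (r : X), r ∈ A → dist p r < t₁ ∨ dist q r < t₁ → ∀ s ∈ T',
        ∀ c ∈ A, dist c r < t₁ →
        ∃ x ∈ A.filter (fun x => dist c x < t₁), dist r x = s := by
      intro r _ _ s hs c hc hcr
      obtain ⟨y, hy, hry⟩ := h s (Finset.mem_insert_of_mem hs) r ‹r ∈ A›
      refine ⟨y, ?_, hry⟩
      rw [Finset.mem_filter]
      refine ⟨hy, ?_⟩
      have : dist c y ≤ max (dist c r) (dist r y) :=
        IsUltrametricDist.dist_triangle_max c r y
      exact this.trans_lt (max_lt hcr (hry ▸ hmax s hs))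
    have hpos' : ∀ t ∈ T', 0 < t := fun t ht => hpos t (Finset.mem_insert_of_mem ht)
    -- A₁ satisfies the hypotheses
    have h1 : ∀ s ∈ T', ∀ r ∈ A₁, ∃ x ∈ A₁, dist r x = s := by
      intro s hs r hr
      rw [hA₁def, Finset.mem_filter] at hr
      exact key r hr.1 (Or.inl hr.2) s hs p hp hr.2
    have h2 : ∀ s ∈ T', ∀ r ∈ A₂, ∃ x ∈ A₂, dist r x = s := by
      intro s hs r hr
      rw [hA₂def, Finset.mem_filter] at hr
      exact key r hr.1 (Or.inr hr.2) s hs q hq hr.2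
    have hA₁ne : A₁.Nonempty := ⟨p, by
      rw [hA₁def, Finset.mem_filter]; exact ⟨hp, by simpa using ht₁pos⟩⟩
    have hA₂ne : A₂.Nonempty := ⟨q, by
      rw [hA₂def, Finset.mem_filter]; exact ⟨hq, by simpa using ht₁pos⟩⟩
    have c1 := ih A₁ hA₁ne hpos' h1
    have c2 := ih A₂ hA₂ne hpos' h2
    have hsub : A₁ ∪ A₂ ⊆ A := by
      intro x hx
      rcases Finset.mem_union.mp hx with hx | hx
      · exact (Finset.mem_filter.mp hx).1
      · exact (Finset.mem_filter.mp hx).1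
    calc 2 ^ (insert t₁ T').card = 2 ^ T'.card + 2 ^ T'.card := by
          rw [Finset.card_insert_of_notMem ht₁notmem, pow_succ]; ring
      _ ≤ A₁.card + A₂.card := Nat.add_le_add c1 c2
      _ = (A₁ ∪ A₂).card := (Finset.card_union_of_disjoint hdisj).symm
      _ ≤ A.card := Finset.card_le_card hsub

/-- For every finite ultrametric space with `n ≥ 1` points, `|C(X)| ≤ 1 + ⌊log₂ n⌋`. -/
theorem card_center_le_log {X : Type*} [MetricSpace X] [Fintype X]
    [IsUltrametricDist X] (n : ℕ) (hn : 1 ≤ n) (hcard : Fintype.card X = n) :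
    (centerOfDistances X).ncard ≤ 1 + Nat.log 2 n := by
  have hXne : Nonempty X := by
    rw [← Fintype.card_pos_iff, hcard]; omega
  haveI := hXne
  obtain ⟨p₀⟩ := hXne
  set C := centerOfDistances X with hC
  -- C is finite, being a subset of the (finite) set of distances
  have hCsub : C ⊆ Set.range (fun pq : X × X => dist pq.1 pq.2) := by
    intro t ht
    obtain ⟨x, hx⟩ := ht p₀
    exact ⟨(p₀, x), hx⟩
  have hCfin : C.Finite := (Set.finite_range _).subset hCsub
  -- the set of positive elements of C, as a Finset
  have hSfin : (C \ {0}).Finite := hCfin.subset Set.diff_subset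
  set S := hSfin.toFinset with hS
  have hSpos : ∀ t ∈ S, 0 < t := by
    intro t ht
    rw [hS, Set.Finite.mem_toFinset, Set.mem_diff] at ht
    obtain ⟨x, hx⟩ := ht.1 p₀
    have h0 : 0 ≤ t := hx ▸ dist_nonneg
    have hne : t ≠ 0 := by simpa using ht.2
    exact lt_of_le_of_ne h0 (Ne.symm hne)
  have hkey : ∀ t ∈ S, ∀ p ∈ (Finset.univ : Finset X), ∃ x ∈ Finset.univ, dist p x = t := by
    intro t ht p _
    rw [hS, Set.Finite.mem_toFinset, Set.mem_diff] at ht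
    obtain ⟨x, hx⟩ := ht.1 p
    exact ⟨x, Finset.mem_univ x, hx⟩
  have hmain := pow_card_le_card S Finset.univ Finset.univ_nonempty hSpos hkey
  rw [Finset.card_univ, hcard] at hmain
  have hlog : S.card ≤ Nat.log 2 n :=
    (Nat.le_log_iff_pow_le one_lt_two (by omega)).mpr hmain
  have hcard' : C.ncard ≤ 1 + S.card := by
    have : C ⊆ insert 0 (C \ {0}) := by
      intro t ht
      by_cases h : t = 0
      · exact Or.inl h
      · exact Or.inr ⟨ht, h⟩
    calc C.ncard ≤ (insert 0 (C \ {0})).ncard :=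
          Set.ncard_le_ncard this (hSfin.insert 0)
      _ ≤ 1 + (C \ {0}).ncard := by
          simpa [add_comm] using Set.ncard_insert_le 0 (C \ {0})
      _ = 1 + S.card := by rw [hS, Set.ncard_eq_toFinset_card _ hSfin]
  omega
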